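/- Let S be a semigroup. The intersection ideal graph Γ(S) is disconnected if and only if S is the union of exactly two minimal left ideals, i.e., there exist distinct minimal left ideals I₁ and I₂ of S with S = I₁ ∪ I₂. -/

import Mathlib

/-- `I` is a left ideal of the semigroup `S`: a nonempty subset closed under
left multiplication by arbitrary elements of `S`. -/
def IsLeftIdeal (S : Type*) [Semigroup S] (I : Set S) : Prop :=
  I.Nonempty ∧ ∀ s : S, ∀ x ∈ I, s * x ∈ I

/-- `I` is a nontrivial left ideal of `S`: a left ideal with `I ≠ S`. -/
def IsNontrivialLeftIdeal (S : Type*) [Semigroup S] (I : Set S) : Prop :=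
  IsLeftIdeal S I ∧ I ≠ Set.univ

/-- `I` is a minimal left ideal of `S`: a nontrivial left ideal properly
containing no left ideal of `S`. -/
def IsMinimalLeftIdeal (S : Type*) [Semigroup S] (I : Set S) : Prop :=
  IsNontrivialLeftIdeal S I ∧ ∀ J : Set S, IsLeftIdeal S J → ¬ J ⊂ I

/-- `I` is a maximal left ideal of `S`: a nontrivial left ideal not properly
contained in any nontrivial left ideal of `S`. -/
def IsMaximalLeftIdeal (S : Type*) [Semigroup S] (I : Set S) : Prop :=
  IsNontrivialLeftIdeal S I ∧ ∀ J : Set S, IsNontrivialLeftIdeal S J → ¬ I ⊂ J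

/-- The intersection ideal graph `Γ(S)`: vertices are the nontrivial left ideals of `S`,
two distinct vertices being adjacent iff their intersection is nonempty. -/
def idealGraph (S : Type*) [Semigroup S] :
    SimpleGraph {I : Set S // IsNontrivialLeftIdeal S I} where
  Adj I J := I ≠ J ∧ (I.1 ∩ J.1).Nonempty
  symm := by
    constructor; rintro I J ⟨h1, h2⟩
    exact ⟨h1.symm, by rwa [Set.inter_comm]⟩
  loopless := by constructor; rintro I ⟨h1, -⟩; exact h1 rfl

section Aux
variable {S : Type*} [Semigroup S]

lemma union_isLeftIdeal {I J : Set S} (hI : IsLeftIdeal S I) (hJ : IsLeftIdeal S J) :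
    IsLeftIdeal S (I ∪ J) := by
  refine ⟨hI.1.mono Set.subset_union_left, ?_⟩
  rintro s x (hx | hx)
  · exact Or.inl (hI.2 s x hx)
  · exact Or.inr (hJ.2 s x hx)

lemma inter_isLeftIdeal {I J : Set S} (hI : IsLeftIdeal S I) (hJ : IsLeftIdeal S J)
    (h : (I ∩ J).Nonempty) : IsLeftIdeal S (I ∩ J) :=
  ⟨h, fun s x hx => ⟨hI.2 s x hx.1, hJ.2 s x hx.2⟩⟩

lemma disj_of_not_reachable {u v : {I : Set S // IsNontrivialLeftIdeal S I}}
    (h : ¬ (idealGraph S).Reachable u v) : u.1 ∩ v.1 = ∅ := by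
  by_contra hne
  rcases eq_or_ne u v with rfl | hne'
  · exact h (SimpleGraph.Reachable.refl u)
  · exact h (SimpleGraph.Adj.reachable ⟨hne', Set.nonempty_iff_ne_empty.mpr hne⟩)

lemma key_minimal {u v : {I : Set S // IsNontrivialLeftIdeal S I}}
    (h : ¬ (idealGraph S).Reachable u v) :
    IsMinimalLeftIdeal S u.1 ∧ u.1 ∪ v.1 = Set.univ := by
  have hdisj := disj_of_not_reachable h
  have hdisj' : ∀ a, a ∈ u.1 → a ∈ v.1 → False := fun a ha hb =>
    Set.eq_empty_iff_forall_notMem.mp hdisj a ⟨ha, hb⟩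
  have hunion : u.1 ∪ v.1 = Set.univ := by
    by_contra hU
    have hW : IsNontrivialLeftIdeal S (u.1 ∪ v.1) :=
      ⟨union_isLeftIdeal u.2.1 v.2.1, hU⟩
    have h1 : (idealGraph S).Adj u ⟨u.1 ∪ v.1, hW⟩ := by
      refine ⟨?_, ?_⟩
      · intro he
        obtain ⟨y, hy⟩ := v.2.1.1
        have hy' : y ∈ u.1 := by
          have : u.1 = u.1 ∪ v.1 := congrArg Subtype.val he
          rw [this]; exact Or.inr hy
        exact hdisj' y hy' hy
      · obtain ⟨x, hx⟩ := u.2.1.1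
        exact ⟨x, hx, Or.inl hx⟩
    have h2 : (idealGraph S).Adj ⟨u.1 ∪ v.1, hW⟩ v := by
      refine ⟨?_, ?_⟩
      · intro he
        obtain ⟨x, hx⟩ := u.2.1.1
        have hx' : x ∈ v.1 := by
          have : u.1 ∪ v.1 = v.1 := congrArg Subtype.val he
          rw [← this]; exact Or.inl hx
        exact hdisj' x hx hx'
      · obtain ⟨y, hy⟩ := v.2.1.1
        exact ⟨y, Or.inr hy, hy⟩
    exact h (h1.reachable.trans h2.reachable)
  refine ⟨⟨u.2, ?_⟩, hunion⟩
  intro K hK hKsub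
  have hKne : K ≠ Set.univ := by
    intro hKuniv
    exact hKsub.2 (hKuniv ▸ Set.subset_univ u.1)
  have hKv : IsNontrivialLeftIdeal S K := ⟨hK, hKne⟩
  obtain ⟨x, hxI, hxK⟩ := Set.exists_of_ssubset hKsub
  have hxv : x ∉ v.1 := fun hx => hdisj' x hxI hx
  have hWne : K ∪ v.1 ≠ Set.univ := by
    intro hWuniv
    have : x ∈ K ∪ v.1 := hWuniv ▸ Set.mem_univ x
    rcases this with h' | h'
    · exact hxK h'
    · exact hxv h'
  have hWv : IsNontrivialLeftIdeal S (K ∪ v.1) :=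
    ⟨union_isLeftIdeal hK v.2.1, hWne⟩
  have e1 : (idealGraph S).Adj u ⟨K, hKv⟩ := by
    refine ⟨?_, ?_⟩
    · intro he
      have : u.1 = K := congrArg Subtype.val he
      exact hxK (this ▸ hxI)
    · obtain ⟨z, hz⟩ := hK.1
      exact ⟨z, hKsub.1 hz, hz⟩
  have e2 : (idealGraph S).Adj ⟨K, hKv⟩ ⟨K ∪ v.1, hWv⟩ := by
    refine ⟨?_, ?_⟩
    · intro he
      have hKeq : K = K ∪ v.1 := congrArg Subtype.val he
      obtain ⟨y, hy⟩ := v.2.1.1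
      have : y ∈ K := hKeq ▸ (Or.inr hy : y ∈ K ∪ v.1)
      exact hdisj' y (hKsub.1 this) hy
    · obtain ⟨z, hz⟩ := hK.1
      exact ⟨z, hz, Or.inl hz⟩
  have e3 : (idealGraph S).Adj ⟨K ∪ v.1, hWv⟩ v := by
    refine ⟨?_, ?_⟩
    · intro he
      have heq : K ∪ v.1 = v.1 := congrArg Subtype.val he
      obtain ⟨z, hz⟩ := hK.1
      have : z ∈ v.1 := heq ▸ (Or.inl hz : z ∈ K ∪ v.1)
      exact hdisj' z (hKsub.1 hz) this
    · obtain ⟨y, hy⟩ := v.2.1.1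
      exact ⟨y, Or.inr hy, hy⟩
  exact h ((e1.reachable.trans e2.reachable).trans e3.reachable)

lemma minimal_disjoint {I₁ I₂ : Set S} (h₁ : IsMinimalLeftIdeal S I₁)
    (h₂ : IsMinimalLeftIdeal S I₂) (hne : I₁ ≠ I₂) : I₁ ∩ I₂ = ∅ := by
  by_contra hcon
  have hnon : (I₁ ∩ I₂).Nonempty := Set.nonempty_iff_ne_empty.mpr hcon
  have hLI : IsLeftIdeal S (I₁ ∩ I₂) := inter_isLeftIdeal h₁.1.1 h₂.1.1 hnon
  by_cases heq : I₁ ∩ I₂ = I₁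
  · have hsub : I₁ ⊆ I₂ := by rw [← heq]; exact Set.inter_subset_right
    exact h₂.2 I₁ h₁.1.1 (ssubset_of_subset_of_ne hsub hne)
  · exact h₁.2 (I₁ ∩ I₂) hLI (ssubset_of_subset_of_ne Set.inter_subset_left heq)

lemma classify {I₁ I₂ : Set S} (h₁ : IsMinimalLeftIdeal S I₁) (h₂ : IsMinimalLeftIdeal S I₂)
    (hne : I₁ ≠ I₂) (hun : I₁ ∪ I₂ = Set.univ) {K : Set S}
    (hK : IsNontrivialLeftIdeal S K) : K = I₁ ∨ K = I₂ := by
  have hdisj := minimal_disjoint h₁ h₂ hne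
  have hcover : ∀ x ∈ K, x ∈ I₁ ∨ x ∈ I₂ := by
    intro x _
    have : x ∈ I₁ ∪ I₂ := hun ▸ Set.mem_univ x
    exact this
  rcases Set.eq_empty_or_nonempty (K ∩ I₁) with h0 | hpos
  · -- K ⊆ I₂
    have hsub : K ⊆ I₂ := by
      intro x hx
      rcases hcover x hx with h' | h'
      · exact (Set.eq_empty_iff_forall_notMem.mp h0 x ⟨hx, h'⟩).elim
      · exact h'
    right
    by_contra hKne
    exact h₂.2 K hK.1 (ssubset_of_subset_of_ne hsub hKne)
  · have hLI := inter_isLeftIdeal hK.1 h₁.1.1 hpos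
    have heq : K ∩ I₁ = I₁ := by
      by_contra hne'
      exact h₁.2 (K ∩ I₁) hLI (ssubset_of_subset_of_ne Set.inter_subset_right hne')
    have hI₁K : I₁ ⊆ K := by rw [← heq]; exact Set.inter_subset_left
    rcases Set.eq_empty_or_nonempty (K ∩ I₂) with h0' | hpos'
    · have hsub : K ⊆ I₁ := by
        intro x hx
        rcases hcover x hx with h' | h'
        · exact h'
        · exact (Set.eq_empty_iff_forall_notMem.mp h0' x ⟨hx, h'⟩).elim
      exact Or.inl (Set.Subset.antisymm hsub hI₁K)
    · have hLI' := inter_isLeftIdeal hK.1 h₂.1.1 hpos'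
      have heq' : K ∩ I₂ = I₂ := by
        by_contra hne'
        exact h₂.2 (K ∩ I₂) hLI' (ssubset_of_subset_of_ne Set.inter_subset_right hne')
      have hI₂K : I₂ ⊆ K := by rw [← heq']; exact Set.inter_subset_left
      have : K = Set.univ := by
        apply Set.eq_univ_of_univ_subset
        rw [← hun]
        exact Set.union_subset hI₁K hI₂K
      exact absurd this hK.2
lemma eq_of_reachable_no_adj {V : Type*} {G : SimpleGraph V}
    (h : ∀ a b, ¬ G.Adj a b) {u v : V} (hr : G.Reachable u v) : u = v := by
  obtain ⟨w⟩ := hr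
  induction w with
  | nil => rfl
  | cons ha _ _ => exact absurd ha (h _ _)

end Aux

/-- `Γ(S)` is disconnected iff `S` is the union of exactly two minimal left ideals. -/
theorem idealGraph_disconnected_iff_union_two_minimal (S : Type*) [Semigroup S] :
    (Nonempty {I : Set S // IsNontrivialLeftIdeal S I} ∧ ¬ (idealGraph S).Connected) ↔
      (∃ I₁ I₂ : Set S, IsMinimalLeftIdeal S I₁ ∧ IsMinimalLeftIdeal S I₂ ∧ I₁ ≠ I₂ ∧
        I₁ ∪ I₂ = Set.univ) := by
  constructor
  · rintro ⟨hne, hcon⟩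
    have hpre : ¬ (idealGraph S).Preconnected := fun hp => hcon (by haveI := hne; exact ⟨hp⟩)
    rw [SimpleGraph.Preconnected] at hpre
    push_neg at hpre
    obtain ⟨u, v, hr⟩ := hpre
    obtain ⟨hmin₁, hun⟩ := key_minimal hr
    obtain ⟨hmin₂, -⟩ := key_minimal (fun r => hr r.symm)
    refine ⟨u.1, v.1, hmin₁, hmin₂, ?_, hun⟩
    intro heq
    have hdisj := disj_of_not_reachable hr
    obtain ⟨x, hx⟩ := u.2.1.1
    exact Set.eq_empty_iff_forall_notMem.mp hdisj x ⟨hx, heq ▸ hx⟩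
  · rintro ⟨I₁, I₂, h₁, h₂, hne, hun⟩
    have hdisj := minimal_disjoint h₁ h₂ hne
    refine ⟨⟨⟨I₁, h₁.1⟩⟩, ?_⟩
    intro hcon
    have hnoadj : ∀ a b : {I : Set S // IsNontrivialLeftIdeal S I},
        ¬ (idealGraph S).Adj a b := by
      rintro a b ⟨hab, x, hx1, hx2⟩
      rcases classify h₁ h₂ hne hun a.2 with ha | ha <;>
        rcases classify h₁ h₂ hne hun b.2 with hb | hb
      · exact hab (Subtype.ext (ha.trans hb.symm))
      · exact Set.eq_empty_iff_forall_notMem.mp hdisj x ⟨ha ▸ hx1, hb ▸ hx2⟩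
      · exact Set.eq_empty_iff_forall_notMem.mp hdisj x ⟨hb ▸ hx2, ha ▸ hx1⟩
      · exact hab (Subtype.ext (ha.trans hb.symm))
    have heq := eq_of_reachable_no_adj hnoadj (hcon.preconnected ⟨I₁, h₁.1⟩ ⟨I₂, h₂.1⟩)
    exact hne (congrArg Subtype.val heq)
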